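/- For every integer d ≥ 2 and every real number t > 0, f_d(1/t) = t² · f_d(t). -/

import Mathlib

open Finset MeasureTheory

/-- `M d t = ∑_{k=0}^{d-1} C(d-1,k)² t^{2k}`. -/
noncomputable def M (d : ℕ) (t : ℝ) : ℝ :=
  ∑ k ∈ Finset.range d, ((d - 1).choose k : ℝ) ^ 2 * t ^ (2 * k)

/-- `A d t = ∑_{k=1}^{d-1} k² C(d-1,k)² t^{2(k-1)}`. -/
noncomputable def A (d : ℕ) (t : ℝ) : ℝ :=
  ∑ k ∈ Finset.Icc 1 (d - 1), (k : ℝ) ^ 2 * ((d - 1).choose k : ℝ) ^ 2 * t ^ (2 * (k - 1))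

/-- `B d t = ∑_{k=1}^{d-1} k C(d-1,k)² t^{2k-1}`. -/
noncomputable def B (d : ℕ) (t : ℝ) : ℝ :=
  ∑ k ∈ Finset.Icc 1 (d - 1), (k : ℝ) * ((d - 1).choose k : ℝ) ^ 2 * t ^ (2 * k - 1)

/-- The density `f d t = (1/π)·√(A_d(t)·M_d(t) − B_d(t)²) / M_d(t)`. -/
noncomputable def f (d : ℕ) (t : ℝ) : ℝ :=
  (1 / Real.pi) * Real.sqrt (A d t * M d t - (B d t) ^ 2) / M d t

/-- The coefficients `a_k`. -/
noncomputable def a (d k : ℕ) : ℝ :=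
  (∑ i ∈ Finset.range d, ∑ j ∈ Finset.range (d - 1),
      if i + j = k then ((d - 1).choose i : ℝ) ^ 2 * ((d - 2).choose j : ℝ) ^ 2 else 0)
  - (∑ i ∈ Finset.range (d - 1), ∑ j ∈ Finset.range (d - 1),
      if i + j + 1 = k then
        ((d - 2).choose i : ℝ) * ((d - 1).choose (i + 1) : ℝ) *
          ((d - 2).choose j : ℝ) * ((d - 1).choose (j + 1) : ℝ)
      else 0)

/-- Generic reflection identity for sums of the form `∑ c k · s^{2k}`. -/
lemma reflect_sum (n : ℕ) (t : ℝ) (ht : t ≠ 0) (c : ℕ → ℝ) :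
    t ^ (2 * n) * ∑ k ∈ Finset.range (n + 1), c k * (1 / t) ^ (2 * k)
      = ∑ k ∈ Finset.range (n + 1), c (n - k) * t ^ (2 * k) := by
  rw [Finset.mul_sum, ← Finset.sum_range_reflect (fun k => c (n - k) * t ^ (2 * k)) (n + 1)]
  refine Finset.sum_congr rfl fun k hk => ?_
  rw [Finset.mem_range, Nat.lt_succ_iff] at hk
  have h1 : n + 1 - 1 - k = n - k := by omega
  have h2 : n - (n - k) = k := by omega
  rw [h1, h2]
  have h3 : t ^ (2 * n) = t ^ (2 * (n - k)) * t ^ (2 * k) := by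
    rw [← pow_add]; congr 1; omega
  rw [h3]
  field_simp
  ring_nf
  rw [mul_comm (t ^ (k * 2)), mul_assoc, ← mul_pow, mul_inv_cancel₀ ht, one_pow, mul_one]

lemma Icc_to_range (n : ℕ) (g : ℕ → ℝ) :
    ∑ k ∈ Finset.Icc 1 n, g k = ∑ k ∈ Finset.range n, g (1 + k) := by
  rw [← Finset.Ico_add_one_right_eq_Icc, Finset.sum_Ico_eq_sum_range]
  simp

/-- `∑_{k<n+1} k·C(n,k)²·t^{2k} = t·B (n+1) t`. -/
lemma Q_eq (n : ℕ) (t : ℝ) :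
    ∑ k ∈ Finset.range (n + 1), (k : ℝ) * ((n.choose k : ℝ)) ^ 2 * t ^ (2 * k)
      = t * B (n + 1) t := by
  rw [B, Nat.add_sub_cancel, Finset.mul_sum, Icc_to_range, Finset.sum_range_succ']
  simp only [Nat.cast_zero, zero_mul, add_zero]
  refine Finset.sum_congr rfl fun k _ => ?_
  have : 2 * (1 + k) - 1 = 2 * k + 1 := by omega
  rw [this]
  have : 2 * (k + 1) = (2 * k + 1) + 1 := by omega
  rw [this, pow_succ]
  push_cast
  ring

/-- `∑_{k<n+1} k²·C(n,k)²·t^{2k} = t²·A (n+1) t`. -/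
lemma R_eq (n : ℕ) (t : ℝ) :
    ∑ k ∈ Finset.range (n + 1), (k : ℝ) ^ 2 * ((n.choose k : ℝ)) ^ 2 * t ^ (2 * k)
      = t ^ 2 * A (n + 1) t := by
  rw [A, Nat.add_sub_cancel, Finset.mul_sum, Icc_to_range, Finset.sum_range_succ']
  simp only [Nat.cast_zero, zero_pow, zero_mul, add_zero, ne_eq, OfNat.ofNat_ne_zero,
    not_false_iff]
  refine Finset.sum_congr rfl fun k _ => ?_
  have h1 : 2 * (1 + k - 1) = 2 * k := by omega
  have h2 : 2 * (k + 1) = 2 * k + 2 := by omega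
  rw [h1, h2, pow_add]
  push_cast
  ring

lemma M_pos (d : ℕ) (hd : 2 ≤ d) (t : ℝ) : 0 < M d t := by
  rw [M]
  apply Finset.sum_pos' (fun k _ => by rw [pow_mul]; positivity)
  refine ⟨0, Finset.mem_range.mpr (by omega), ?_⟩
  simp

theorem stmt_7 (d : ℕ) (hd : 2 ≤ d) (t : ℝ) (ht : 0 < t) :
    f d (1 / t) = t ^ 2 * f d t := by
  obtain ⟨n, rfl⟩ : ∃ n, d = n + 1 := ⟨d - 1, by omega⟩
  have hn : 1 ≤ n := by omega
  have ht0 : t ≠ 0 := ne_of_gt ht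
  have htn : (0:ℝ) < t ^ (2 * n) := by positivity
  have hM : 0 < M (n + 1) t := M_pos _ hd t
  have hM' : 0 < M (n + 1) (1 / t) := M_pos _ hd _
  -- reflection for M
  have eM : t ^ (2 * n) * M (n + 1) (1 / t) = M (n + 1) t := by
    rw [M, M, Nat.add_sub_cancel,
      reflect_sum n t ht0 (fun k => ((n.choose k : ℝ)) ^ 2)]
    refine Finset.sum_congr rfl fun k hk => ?_
    rw [Finset.mem_range, Nat.lt_succ_iff] at hk
    rw [Nat.choose_symm hk]
  -- reflection for Q
  have eQ : t ^ (2 * n) * ((1 / t) * B (n + 1) (1 / t))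
      = (n : ℝ) * M (n + 1) t - t * B (n + 1) t := by
    rw [← Q_eq, ← Q_eq, M, Nat.add_sub_cancel,
      reflect_sum n t ht0 (fun k => (k : ℝ) * ((n.choose k : ℝ)) ^ 2),
      Finset.mul_sum, ← Finset.sum_sub_distrib]
    refine Finset.sum_congr rfl fun k hk => ?_
    rw [Finset.mem_range, Nat.lt_succ_iff] at hk
    rw [Nat.choose_symm hk, Nat.cast_sub hk]
    ring
  -- reflection for R
  have eR : t ^ (2 * n) * ((1 / t) ^ 2 * A (n + 1) (1 / t))
      = (n : ℝ) ^ 2 * M (n + 1) t - 2 * n * (t * B (n + 1) t)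
        + t ^ 2 * A (n + 1) t := by
    rw [← R_eq, ← R_eq, M, Nat.add_sub_cancel, ← Q_eq,
      reflect_sum n t ht0 (fun k => (k : ℝ) ^ 2 * ((n.choose k : ℝ)) ^ 2),
      Finset.mul_sum, Finset.mul_sum, ← Finset.sum_sub_distrib, ← Finset.sum_add_distrib]
    refine Finset.sum_congr rfl fun k hk => ?_
    rw [Finset.mem_range, Nat.lt_succ_iff] at hk
    rw [Nat.choose_symm hk, Nat.cast_sub hk]
    ring
  -- solve for the reflected quantities
  have e1 : M (n + 1) (1 / t) = M (n + 1) t / t ^ (2 * n) := by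
    field_simp at eM ⊢; linarith [eM]
  have e2 : B (n + 1) (1 / t)
      = t * ((n : ℝ) * M (n + 1) t - t * B (n + 1) t) / t ^ (2 * n) := by
    field_simp at eQ ⊢; linarith [eQ]
  have e3 : A (n + 1) (1 / t)
      = t ^ 2 * ((n : ℝ) ^ 2 * M (n + 1) t - 2 * n * (t * B (n + 1) t)
          + t ^ 2 * A (n + 1) t) / t ^ (2 * n) := by
    field_simp at eR ⊢; linarith [eR]
  -- final computation
  rw [f, f, e1, e2, e3]
  have key : t ^ 2 * ((n : ℝ) ^ 2 * M (n + 1) t - 2 * n * (t * B (n + 1) t)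
        + t ^ 2 * A (n + 1) t) / t ^ (2 * n) * (M (n + 1) t / t ^ (2 * n))
      - (t * ((n : ℝ) * M (n + 1) t - t * B (n + 1) t) / t ^ (2 * n)) ^ 2
      = (t ^ 2 / t ^ (2 * n)) ^ 2
          * (A (n + 1) t * M (n + 1) t - (B (n + 1) t) ^ 2) := by
    field_simp
    ring
  rw [key, Real.sqrt_mul (by positivity), Real.sqrt_sq (by positivity)]
  field_simp
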